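/- Let q be an odd prime, r an odd prime with r mod 2q ∈ D_0^{(2q)}, and ℓ_k = ord_{2q}(r). Then for each i ∈ {0,1}, the set D_i^{(2q)} is a disjoint union of exactly θ = (q−1)/(2ℓ_k) distinct r-cyclotomic cosets modulo 2q, each of size ℓ_k; consequently g_{D_i}^{(2q)}(x) = ∏_{j=1}^{θ} M_{d_{i_j}}(x) is a product of θ monic irreducible polynomials over 𝔽_r, each of degree ℓ_k, where M_t(x) = ∏_{j ∈ C_{(t,2q)}}(x − η^j) is the minimal polynomial of η^t over 𝔽_r. -/

import Mathlib

open Polynomial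

/-- The cyclotomic class `D_i^{(2q)} = {g^(2s+i) mod 2q : 0 ≤ s < (q-1)/2}`. -/
def Dcl (q g i : ℕ) : Finset ℕ :=
  (Finset.range ((q - 1) / 2)).image fun s => g ^ (2 * s + i) % (2 * q)

/-- The cyclotomic class `E_i^{(2q)} = {2u mod 2q : u ∈ D_i^{(2q)}}`. -/
def Ecl (q g i : ℕ) : Finset ℕ :=
  (Dcl q g i).image fun u => 2 * u % (2 * q)

/-- The `r`-cyclotomic coset modulo `2q` containing `t`: `{t·r^i mod 2q : i ∈ ℕ}`. -/
def Ccoset (q r t : ℕ) : Set ℕ := {x | ∃ i : ℕ, x = t * r ^ i % (2 * q)}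

/-- `g_{D_i}^{(2q)}(x) = ∏_{j ∈ D_i^{(2q)}} (x - η^j)`. -/
noncomputable def gDpoly (F : Type) [Field F] (q g i : ℕ) (η : F) : F[X] :=
  ∏ j ∈ Dcl q g i, (X - C (η ^ j))

/-- `g_{E_i}^{(2q)}(x) = ∏_{j ∈ E_i^{(2q)}} (x - η^j)`. -/
noncomputable def gEpoly (F : Type) [Field F] (q g i : ℕ) (η : F) : F[X] :=
  ∏ j ∈ Ecl q g i, (X - C (η ^ j))

/-- `M_t(x) = ∏_{j ∈ C_{(t,2q)}} (x - η^j)`, the minimal polynomial of `η^t`. -/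
noncomputable def Mpoly (F : Type) [Field F] (q r t : ℕ) (η : F) : F[X] :=
  ∏ᶠ j ∈ Ccoset q r t, (X - C (η ^ j))

/-- The reciprocal polynomial `h̃(x) = h(0)⁻¹ x^{deg h} h(x⁻¹)`. -/
noncomputable def recip (F : Type) [Field F] (h : F[X]) : F[X] :=
  C (h.coeff 0)⁻¹ * h.reverse

lemma aux_pow_mod_eq {M : Type*} [Monoid M] (η : M) (N m : ℕ) (h : η ^ N = 1) :
    η ^ (m % N) = η ^ m := by
  conv_rhs => rw [← Nat.div_add_mod m N]
  rw [pow_add, pow_mul, h, one_pow, one_mul]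

lemma aux_mem_bot_pow {F : Type} [Field F] (r : ℕ) (hr : r.Prime) [CharP F r]
    {x : F} (hx : x ∈ (⊥ : Subfield F)) : x ^ r = x := by
  haveI := Fact.mk hr
  have hle : (⊥ : Subfield F) ≤ (ZMod.castHom (dvd_refl r) F).fieldRange := bot_le
  obtain ⟨y, rfl⟩ := hle hx
  rw [← map_pow, ZMod.pow_card]

lemma aux_pow_mem_bot {F : Type} [Field F] (r : ℕ) (hr : r.Prime) [CharP F r]
    {x : F} (hx : x ^ r = x) : x ∈ (⊥ : Subfield F) := by
  haveI := Fact.mk hr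
  classical
  set A := ZMod.castHom (dvd_refl r) F with hA
  have hinj : Function.Injective A := A.injective
  set P : F[X] := X ^ r - X with hP
  have hPne : P ≠ 0 := by
    intro h
    have h1 : P.coeff 1 = -1 := by
      simp [hP, coeff_X_pow, if_neg hr.one_lt.ne]
    rw [h] at h1
    simp at h1
  have hdeg : P.natDegree ≤ r := by
    refine le_trans (natDegree_sub_le _ _) ?_
    simp [natDegree_X_pow, natDegree_X]
    exact hr.one_lt.le
  set Sfin : Finset F := Finset.univ.image A with hS
  have hScard : Sfin.card = r := by
    rw [hS, Finset.card_image_of_injective _ hinj, Finset.card_univ, ZMod.card]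
  have hroot : ∀ y : ZMod r, P.IsRoot (A y) := by
    intro y
    simp only [IsRoot.def, hP, eval_sub, eval_pow, eval_X, ← map_pow, ZMod.pow_card, sub_self]
  have hsub : Sfin ⊆ P.roots.toFinset := by
    intro x hx
    obtain ⟨y, _, rfl⟩ := Finset.mem_image.mp hx
    simp only [Multiset.mem_toFinset, mem_roots hPne]
    exact hroot y
  by_cases hmem : x ∈ Sfin
  · obtain ⟨y, _, rfl⟩ := Finset.mem_image.mp hmem
    have hAy : A y = ((y.val : ℕ) : F) := by
      rw [ZMod.castHom_apply, ← ZMod.natCast_val]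
    rw [hAy]
    exact natCast_mem _ _
  · exfalso
    have hx' : x ∈ P.roots.toFinset := by
      simp only [Multiset.mem_toFinset, mem_roots hPne]
      simp [IsRoot.def, hP, hx]
    have h1 : insert x Sfin ⊆ P.roots.toFinset := Finset.insert_subset hx' hsub
    have h2 := Finset.card_le_card h1
    rw [Finset.card_insert_of_notMem hmem, hScard] at h2
    have h3 := (Multiset.toFinset_card_le P.roots).trans ((P.card_roots').trans hdeg)
    omega


lemma aux_prod_X_sub_C_dvd {F : Type} [Field F] (t : Finset ℕ) (e : ℕ → F)
    (hinj : Set.InjOn e ↑t) (p : F[X]) (hroot : ∀ a ∈ t, p.eval (e a) = 0) :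
    (∏ a ∈ t, (X - C (e a))) ∣ p := by
  refine Finset.prod_dvd_of_coprime ?_ fun a ha => (dvd_iff_isRoot).mpr (hroot a ha)
  intro a ha b hb hab
  have := Polynomial.pairwise_coprime_X_sub_C (K := F) (I := ↥(t : Set ℕ))
    (s := fun x => e ↑x) (fun x y hxy => Subtype.ext (hinj x.2 y.2 hxy))
  have h2 := this (i := ⟨a, ha⟩) (j := ⟨b, hb⟩) (fun h => hab (congrArg Subtype.val h))
  exact h2

lemma aux_eval_frob {F : Type} [Field F] (r : ℕ) (hr : r.Prime) [CharP F r] (p : F[X])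
    (hp : ∀ k, (p.coeff k) ^ r = p.coeff k) (x : F) (hx : p.eval x = 0) (s : ℕ) :
    p.eval (x ^ r ^ s) = 0 := by
  haveI := Fact.mk hr
  induction s with
  | zero => simpa using hx
  | succ m ih =>
    have hstep : ∀ y : F, p.eval y = 0 → p.eval (y ^ r) = 0 := by
      intro y hy
      have hφ : p.map (frobenius F r) = p := by
        ext k
        rw [coeff_map, frobenius_def, hp]
      have : p.eval (y ^ r) = (p.eval y) ^ r := by
        conv_lhs => rw [← hφ]
        rw [← frobenius_def, eval_map, eval₂_at_apply, frobenius_def]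
      rw [this, hy, zero_pow hr.ne_zero]
    have : x ^ r ^ (m + 1) = (x ^ r ^ m) ^ r := by
      rw [← pow_mul, pow_succ]
    rw [this]
    exact hstep _ ih



theorem stmt13 (q g : ℕ) (hq : q.Prime) (hodd : Odd q)
    (hgq : orderOf ((g : ℕ) : ZMod q) = q - 1)
    (hg2q : orderOf ((g : ℕ) : ZMod (2 * q)) = q - 1)
    (r : ℕ) (hr : r.Prime) (hrodd : Odd r)
    (hrD : r % (2 * q) ∈ Dcl q g 0)
    (F : Type) [Field F] [Fintype F] [CharP F r]
    (hcard : Fintype.card F = r ^ orderOf ((r : ℕ) : ZMod (2 * q)))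
    (η : F) (hη : IsPrimitiveRoot η (2 * q))
    (i : ℕ) (hi : i ∈ ({0, 1} : Set ℕ)) :
    ∃ d : Fin ((q - 1) / (2 * orderOf ((r : ℕ) : ZMod (2 * q)))) → ℕ,
      (∀ j j', j ≠ j' → Disjoint (Ccoset q r (d j)) (Ccoset q r (d j'))) ∧
      (⋃ j, Ccoset q r (d j)) = ↑(Dcl q g i) ∧
      (∀ j, (Ccoset q r (d j)).ncard = orderOf ((r : ℕ) : ZMod (2 * q))) ∧
      gDpoly F q g i η = ∏ j, Mpoly F q r (d j) η ∧
      (∀ j, (Mpoly F q r (d j) η).Monic ∧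
        (Mpoly F q r (d j) η).natDegree = orderOf ((r : ℕ) : ZMod (2 * q)) ∧
        ∃ p : Polynomial (⊥ : Subfield F), Irreducible p ∧
          p.map (⊥ : Subfield F).subtype = Mpoly F q r (d j) η) := by
  classical
  have hq2 : 2 ≤ q := hq.two_le
  obtain ⟨k, hk⟩ := hodd
  set N := 2 * q with hNdef
  have hNpos : 0 < N := by omega
  haveI : NeZero N := ⟨by omega⟩
  set n := (q - 1) / 2 with hndef
  have h2n : 2 * n = q - 1 := by omega
  have hnpos : 0 < n := by omega
  -- the unit u with ↑u = g
  have hgu : IsUnit ((g : ℕ) : ZMod N) := by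
    refine IsUnit.of_pow_eq_one (n := q - 1) ?_ (by omega)
    rw [← hg2q]; exact pow_orderOf_eq_one _
  set u := hgu.unit with hudef
  have hu : (u : ZMod N) = ((g : ℕ) : ZMod N) := hgu.unit_spec
  have horderu : orderOf u = q - 1 := by rw [← orderOf_units, hu, hg2q]
  -- s0 from hrD
  simp only [Dcl, Finset.mem_image, Finset.mem_range] at hrD
  obtain ⟨s0, hs0lt, hs0⟩ := hrD
  set v := u ^ (2 * s0) with hvdef
  have hv : (v : ZMod N) = ((r : ℕ) : ZMod N) := by
    have hc := congrArg (Nat.cast : ℕ → ZMod N) hs0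
    rw [ZMod.natCast_mod, ZMod.natCast_mod] at hc
    rw [hvdef, Units.val_pow_eq_pow_val, hu]
    push_cast at hc
    simpa using hc
  set ℓ := orderOf ((r : ℕ) : ZMod N) with hldef
  have hordv : orderOf v = ℓ := by rw [← orderOf_units, hv]
  set w := u ^ 2 with hwdef
  have hordw : orderOf w = n := by
    rw [hwdef, orderOf_pow, horderu, Nat.gcd_comm,
      Nat.gcd_eq_left ⟨k, by omega⟩, hndef]
  have hvw : v = w ^ s0 := by rw [hvdef, hwdef, pow_mul]
  set θ := Nat.gcd n s0 with hθdef
  have hℓθ : ℓ = n / θ := by rw [← hordv, hvw, orderOf_pow, hordw]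
  have hθdvd : θ ∣ n := Nat.gcd_dvd_left _ _
  have hθpos : 0 < θ := Nat.gcd_pos_of_pos_left _ hnpos
  have hℓpos : 0 < ℓ := hordv ▸ orderOf_pos v
  have hθℓ : θ * ℓ = n := by rw [hℓθ]; exact Nat.mul_div_cancel' hθdvd
  have hΘ : (q - 1) / (2 * ℓ) = θ := by
    rw [← h2n, ← Nat.div_div_eq_div_mul, Nat.mul_div_cancel_left _ (by norm_num), hℓθ,
      Nat.div_div_self hθdvd hnpos.ne']
  have hθdvds0 : θ ∣ s0 := Nat.gcd_dvd_right _ _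
  -- Bezout: ∃ c, v ^ c = w ^ θ
  obtain ⟨c, hc⟩ : ∃ c : ℕ, v ^ c = w ^ θ := by
    have hb := Nat.gcd_eq_gcd_ab n s0
    have key : w ^ (θ : ℤ) = v ^ (Nat.gcdB n s0) := by
      calc w ^ (θ : ℤ) = w ^ ((n : ℤ) * Nat.gcdA n s0 + (s0 : ℤ) * Nat.gcdB n s0) := by
            rw [hθdef, hb]
        _ = (w ^ (n : ℤ)) ^ Nat.gcdA n s0 * (w ^ (s0 : ℤ)) ^ Nat.gcdB n s0 := by
            rw [zpow_add, zpow_mul, zpow_mul]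
        _ = (w ^ (s0 : ℤ)) ^ Nat.gcdB n s0 := by
            rw [zpow_natCast, ← hordw, pow_orderOf_eq_one, one_zpow, one_mul]
        _ = v ^ Nat.gcdB n s0 := by rw [zpow_natCast, ← hvw]
    refine ⟨(Nat.gcdB n s0 % (ℓ : ℤ)).toNat, ?_⟩
    have hmod : v ^ (Nat.gcdB n s0 % (ℓ : ℤ)) = v ^ (Nat.gcdB n s0) := by
      conv_rhs => rw [← Int.emod_add_mul_ediv (Nat.gcdB n s0) (ℓ : ℤ)]
      rw [zpow_add, zpow_mul, zpow_natCast, ← hordv, pow_orderOf_eq_one, one_zpow, mul_one]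
    have hnn : (0 : ℤ) ≤ Nat.gcdB n s0 % (ℓ : ℤ) :=
      Int.emod_nonneg _ (by exact_mod_cast hℓpos.ne')
    rw [← zpow_natCast v, Int.toNat_of_nonneg hnn, hmod, ← key, zpow_natCast]
  -- val computations
  have hkey : ∀ j s : ℕ, (g ^ (2 * j + i) % N) * r ^ s % N
      = ((u ^ (2 * j + i) * v ^ s : (ZMod N)ˣ) : ZMod N).val := by
    intro j s
    rw [← ZMod.val_natCast]
    congr 1
    push_cast [ZMod.natCast_mod]
    rw [hu, hv]
  have hDval : ∀ s : ℕ, g ^ (2 * s + i) % N = ((u ^ (2 * s + i) : (ZMod N)ˣ) : ZMod N).val := by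
    intro s
    rw [← ZMod.val_natCast]
    congr 1
    push_cast
    rw [hu]
  have hvalinj : ∀ x y : (ZMod N)ˣ, ((x : ZMod N).val = (y : ZMod N).val) → x = y := by
    intro x y h
    exact Units.ext (ZMod.val_injective N h)
  have hupow : ∀ a b : ℕ, u ^ a * u ^ b = u ^ (a + b) := fun a b => (pow_add u a b).symm
  have huv : ∀ j s : ℕ, u ^ (2 * j + i) * v ^ s = w ^ (j + s0 * s) * u ^ i := by
    intro j s
    have h1 : v ^ s = u ^ (2 * s0 * s) := by rw [hvw, hwdef, ← pow_mul, ← pow_mul, mul_assoc]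
    have h2 : w ^ (j + s0 * s) = u ^ (2 * (j + s0 * s)) := by rw [hwdef, ← pow_mul]
    rw [h1, h2, hupow, mul_comm (u ^ (2 * (j + s0 * s))) (u ^ i), hupow]
    congr 1
    ring
  have hu2 : ∀ a : ℕ, u ^ (2 * a + i) = w ^ a * u ^ i := by
    intro a
    have h := huv a 0
    simpa using h
  -- the representative function
  set d : Fin ((q - 1) / (2 * ℓ)) → ℕ := fun j => g ^ (2 * (j : ℕ) + i) % N with hddef
  have hjθ : ∀ j : Fin ((q - 1) / (2 * ℓ)), (j : ℕ) < θ := fun j => hΘ ▸ j.isLt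
  set Cfin : Fin ((q - 1) / (2 * ℓ)) → Finset ℕ :=
    fun j => (Finset.range ℓ).image fun s => (d j) * r ^ s % N with hCfindef
  have hCco : ∀ (j) (x : ℕ), x ∈ Ccoset q r (d j) ↔ ∃ s : ℕ, x = (d j) * r ^ s % N := by
    intro j x; rfl
  have hCfin : ∀ j, Ccoset q r (d j) = ↑(Cfin j) := by
    intro j
    ext x
    simp only [hCco, hCfindef, Finset.coe_image, Set.mem_image, Finset.mem_coe,
      Finset.coe_range, Set.mem_Iio]
    constructor
    · rintro ⟨s, rfl⟩
      refine ⟨s % ℓ, Nat.mod_lt _ hℓpos, ?_⟩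
      have hvs : v ^ (s % ℓ) = v ^ s := by
        conv_lhs => rw [← hordv]
        exact pow_mod_orderOf v s
      show (d j) * r ^ (s % ℓ) % N = (d j) * r ^ s % N
      simp only [hddef]
      rw [hkey, hkey, hvs]
    · rintro ⟨s, _, rfl⟩
      exact ⟨s, rfl⟩
  have hinjC : ∀ j, Set.InjOn (fun s => (d j) * r ^ s % N) ↑(Finset.range ℓ) := by
    intro j s hs s' hs' h
    simp only [Finset.coe_range, Set.mem_Iio] at hs hs'
    simp only [hddef] at h
    rw [hkey, hkey] at h
    have h2 := mul_left_cancel (hvalinj _ _ h)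
    rw [pow_eq_pow_iff_modEq, hordv] at h2
    rwa [Nat.ModEq, Nat.mod_eq_of_lt hs, Nat.mod_eq_of_lt hs'] at h2
  have hcardC : ∀ j, (Cfin j).card = ℓ := by
    intro j
    rw [hCfindef]
    simp only
    rw [Finset.card_image_of_injOn (hinjC j), Finset.card_range]
  -- disjointness
  have hdisj : ∀ j j', j ≠ j' → Disjoint (Ccoset q r (d j)) (Ccoset q r (d j')) := by
    intro j j' hne
    rw [Set.disjoint_left]
    rintro x ⟨s, rfl⟩ ⟨s', heq⟩
    simp only [hddef] at heq
    rw [hkey, hkey] at heq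
    have h1 := hvalinj _ _ heq
    rw [huv, huv] at h1
    have h2 := mul_right_cancel h1
    rw [pow_eq_pow_iff_modEq, hordw] at h2
    have h3 : (j : ℕ) + s0 * s ≡ (j' : ℕ) + s0 * s' [MOD θ] := h2.of_dvd hθdvd
    have h4 : (j : ℕ) ≡ (j' : ℕ) [MOD θ] := by
      have e1 : (j : ℕ) + s0 * s ≡ (j : ℕ) + 0 [MOD θ] :=
        Nat.ModEq.add_left _ (Nat.modEq_zero_iff_dvd.mpr (hθdvds0.mul_right s))
      have e2 : (j' : ℕ) + s0 * s' ≡ (j' : ℕ) + 0 [MOD θ] :=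
        Nat.ModEq.add_left _ (Nat.modEq_zero_iff_dvd.mpr (hθdvds0.mul_right s'))
      simpa using (e1.symm.trans h3).trans e2
    have h5 : (j : ℕ) = (j' : ℕ) := by
      rwa [Nat.ModEq, Nat.mod_eq_of_lt (hjθ j), Nat.mod_eq_of_lt (hjθ j')] at h4
    exact hne (Fin.ext h5)
  -- union
  have hunion : (⋃ j, Ccoset q r (d j)) = ↑(Dcl q g i) := by
    ext x
    simp only [Set.mem_iUnion, Dcl, Finset.coe_image, Set.mem_image, Finset.mem_coe,
      Finset.coe_range, Set.mem_Iio, hCco]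
    constructor
    · rintro ⟨j, s, rfl⟩
      set m := ((j : ℕ) + s0 * s) % n with hm
      refine ⟨m, Nat.mod_lt _ hnpos, ?_⟩
      have hpow : u ^ (2 * m + i) = u ^ (2 * ((j : ℕ) + s0 * s) + i) := by
        rw [pow_eq_pow_iff_modEq, horderu]
        have hmm := ((Nat.mod_modEq ((j : ℕ) + s0 * s) n).mul_left' (c := 2)).add_right i
        rwa [h2n] at hmm
      have hunits : u ^ (2 * m + i) = u ^ (2 * (j : ℕ) + i) * v ^ s := by
        rw [huv, hpow, hu2]
      simp only [hddef]
      rw [hkey, hDval, hunits]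
    · rintro ⟨s, hs, rfl⟩
      refine ⟨⟨s % θ, by rw [hΘ]; exact Nat.mod_lt _ hθpos⟩, c * (s / θ), ?_⟩
      have hw1 : w ^ ((s % θ) + s0 * (c * (s / θ))) = w ^ s := by
        have h1 : (v ^ c) ^ (s / θ) = w ^ (s0 * (c * (s / θ))) := by
          rw [← pow_mul, hvw, ← pow_mul]
        calc w ^ ((s % θ) + s0 * (c * (s / θ)))
            = w ^ (s % θ) * w ^ (s0 * (c * (s / θ))) := pow_add w _ _
          _ = w ^ (s % θ) * (v ^ c) ^ (s / θ) := by rw [h1]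
          _ = w ^ (s % θ) * (w ^ θ) ^ (s / θ) := by rw [hc]
          _ = w ^ (s % θ) * w ^ (θ * (s / θ)) := by rw [pow_mul]
          _ = w ^ ((s % θ) + θ * (s / θ)) := (pow_add w _ _).symm
          _ = w ^ s := by rw [Nat.mod_add_div]
      have hunits : u ^ (2 * s + i) = u ^ (2 * (s % θ) + i) * v ^ (c * (s / θ)) := by
        rw [huv, hw1, ← hu2]
      simp only [hddef, Fin.val_mk]
      rw [hkey, hDval, hunits]
  refine ⟨d, hdisj, hunion, ?_, ?_, ?_⟩
  · intro j
    rw [hCfin j, Set.ncard_coe_finset, hcardC]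
  · -- factorization of gDpoly
    have hpd : Set.PairwiseDisjoint (↑(Finset.univ : Finset (Fin ((q - 1) / (2 * ℓ)))) : Set (Fin ((q - 1) / (2 * ℓ)))) Cfin := by
      intro j _ j' _ hne
      have h1 := hdisj j j' hne
      rw [hCfin, hCfin] at h1
      rw [Function.onFun, ← Finset.disjoint_coe]
      exact h1
    have hDfin : Dcl q g i = Finset.univ.biUnion Cfin := by
      apply Finset.coe_injective
      rw [Finset.coe_biUnion, ← hunion]
      simp only [Finset.coe_univ, Set.mem_univ, Set.iUnion_true]
      exact Set.iUnion_congr fun j => hCfin j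
    have hM : ∀ j, Mpoly F q r (d j) η = ∏ a ∈ Cfin j, (X - C (η ^ a)) := by
      intro j
      unfold Mpoly
      rw [hCfin j, finprod_mem_coe_finset]
    unfold gDpoly
    rw [hDfin, Finset.prod_biUnion hpd]
    exact Finset.prod_congr rfl fun j _ => (hM j).symm
  · -- each factor is (the image of) a monic irreducible polynomial of degree ℓ
    intro j
    haveI := Fact.mk hr
    have hM : Mpoly F q r (d j) η = ∏ a ∈ Cfin j, (X - C (η ^ a)) := by
      unfold Mpoly
      rw [hCfin j, finprod_mem_coe_finset]
    set MM : F[X] := ∏ a ∈ Cfin j, (X - C (η ^ a)) with hMM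
    have hMMmonic : MM.Monic := monic_prod_of_monic _ _ fun a _ => monic_X_sub_C _
    have hMMdeg : MM.natDegree = ℓ := by
      rw [hMM, natDegree_prod _ _ fun a _ => X_sub_C_ne_zero _]
      simp only [natDegree_X_sub_C]
      rw [Finset.sum_const, smul_eq_mul, mul_one, hcardC]
    have hη1 : η ^ N = 1 := hη.pow_eq_one
    have hCl : ∀ a ∈ Cfin j, a < N := by
      intro a ha
      simp only [hCfindef, Finset.mem_image] at ha
      obtain ⟨s, _, rfl⟩ := ha
      exact Nat.mod_lt _ hNpos
    have hηinj : Set.InjOn (fun a => η ^ a) ↑(Cfin j) := fun a ha b hb hab =>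
      hη.pow_inj (hCl a ha) (hCl b hb) hab
    have hdlt : d j < N := Nat.mod_lt _ hNpos
    have hmemd : d j ∈ Cfin j := by
      simp only [hCfindef, Finset.mem_image]
      exact ⟨0, Finset.mem_range.mpr hℓpos, by rw [pow_zero, mul_one, Nat.mod_eq_of_lt hdlt]⟩
    set β := η ^ (d j) with hβ
    have heval0 : MM.eval β = 0 := by
      rw [hMM, eval_prod]
      exact Finset.prod_eq_zero hmemd (by simp [hβ])
    have hrunit : IsUnit ((r : ℕ) : ZMod N) := ⟨v, hv⟩
    have hmulmem : ∀ a ∈ Cfin j, a * r % N ∈ Cfin j := by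
      intro a ha
      rw [← Finset.mem_coe, ← hCfin] at ha ⊢
      obtain ⟨s, rfl⟩ := ha
      refine ⟨s + 1, ?_⟩
      calc (d j) * r ^ s % N * r % N = (((d j) * r ^ s % N * r : ℕ) : ZMod N).val :=
            (ZMod.val_natCast N _).symm
        _ = (((d j) * r ^ (s + 1) : ℕ) : ZMod N).val := by
            push_cast [ZMod.natCast_mod]
            ring_nf
        _ = (d j) * r ^ (s + 1) % N := ZMod.val_natCast N _
    have hrinj : Set.InjOn (fun a => a * r % N) ↑(Cfin j) := by
      intro a ha b hb hab
      simp only at hab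
      have h1 : ((a * r % N : ℕ) : ZMod N) = ((b * r % N : ℕ) : ZMod N) := by rw [hab]
      rw [ZMod.natCast_mod, ZMod.natCast_mod, Nat.cast_mul, Nat.cast_mul] at h1
      have h2 := hrunit.mul_right_cancel h1
      have h3 : a = ((a : ℕ) : ZMod N).val := (ZMod.val_cast_of_lt (hCl a ha)).symm
      rw [h3, h2, ZMod.val_cast_of_lt (hCl b hb)]
    have himg : (Cfin j).image (fun a => a * r % N) = Cfin j := by
      apply Finset.eq_of_subset_of_card_le
      · intro x hx
        obtain ⟨a, ha, rfl⟩ := Finset.mem_image.mp hx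
        exact hmulmem a ha
      · rw [Finset.card_image_of_injOn hrinj]
    have hmapMM : MM.map (frobenius F r) = MM := by
      rw [hMM, Polynomial.map_prod]
      have hfac : ∀ a ∈ Cfin j, (X - C (η ^ a)).map (frobenius F r) = X - C (η ^ (a * r % N)) := by
        intro a ha
        rw [Polynomial.map_sub, map_X, map_C, frobenius_def]
        congr 1
        rw [← pow_mul, ← aux_pow_mod_eq η N (a * r) hη1]
      rw [Finset.prod_congr rfl hfac]
      conv_rhs => rw [← himg, Finset.prod_image (fun x hx y hy h => hrinj hx hy h)]
    have hcf : ∀ k, (MM.coeff k) ^ r = MM.coeff k := by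
      intro k
      have h := congrArg (fun P : F[X] => P.coeff k) hmapMM
      simpa [Polynomial.coeff_map, frobenius_def] using h
    have hsub : (↑MM.coeffs : Set F) ⊆ ↑(⊥ : Subfield F).toSubring := by
      intro cc hcc
      obtain ⟨kk, _, rfl⟩ := Polynomial.mem_coeffs_iff.mp hcc
      exact aux_pow_mem_bot r hr (hcf kk)
    set Q : Polynomial (⊥ : Subfield F) := MM.toSubring (⊥ : Subfield F).toSubring hsub with hQ
    have hQmap : Q.map (⊥ : Subfield F).subtype = MM := Polynomial.map_toSubring _ _ _
    have hQmonic : Q.Monic := (Polynomial.monic_toSubring _ _ _).mpr hMMmonic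
    have halg : algebraMap (⊥ : Subfield F) F = (⊥ : Subfield F).subtype := rfl
    have hQ0 : Polynomial.aeval β Q = 0 := by
      rw [Polynomial.aeval_def, Polynomial.eval₂_eq_eval_map, halg, hQmap]
      exact heval0
    have hint : IsIntegral (⊥ : Subfield F) β :=
      ⟨Q, hQmonic, by rw [← Polynomial.aeval_def]; exact hQ0⟩
    set p : Polynomial (⊥ : Subfield F) := minpoly (⊥ : Subfield F) β with hp
    have hirr : Irreducible p := minpoly.irreducible hint
    have hpQ : p ∣ Q := minpoly.dvd _ _ hQ0
    have hpMM : p.map (⊥ : Subfield F).subtype ∣ MM := by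
      have h := Polynomial.map_dvd ((⊥ : Subfield F).subtype) hpQ
      rwa [hQmap] at h
    have hcf' : ∀ k, ((p.map (⊥ : Subfield F).subtype).coeff k) ^ r
        = (p.map (⊥ : Subfield F).subtype).coeff k := by
      intro k
      rw [Polynomial.coeff_map]
      exact aux_mem_bot_pow r hr (p.coeff k).2
    have hβroot : (p.map (⊥ : Subfield F).subtype).eval β = 0 := by
      have h := minpoly.aeval (⊥ : Subfield F) β
      rwa [Polynomial.aeval_def, Polynomial.eval₂_eq_eval_map, halg] at h
    have hMMp' : MM ∣ p.map (⊥ : Subfield F).subtype := by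
      rw [hMM]
      refine aux_prod_X_sub_C_dvd _ _ hηinj _ ?_
      intro a ha
      rw [← Finset.mem_coe, ← hCfin] at ha
      obtain ⟨s, rfl⟩ := ha
      have hae : η ^ ((d j) * r ^ s % N) = β ^ (r ^ s) := by
        rw [aux_pow_mod_eq η N _ hη1, pow_mul]
      rw [hae]
      exact aux_eval_frob r hr _ hcf' β hβroot s
    have heq : p.map (⊥ : Subfield F).subtype = MM :=
      Polynomial.eq_of_monic_of_associated ((minpoly.monic hint).map _) hMMmonic
        (associated_of_dvd_dvd hpMM hMMp')
    refine ⟨by rw [hM]; exact hMMmonic, by rw [hM, hMMdeg], p, hirr, by rw [heq, hM]⟩
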